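/- Linear Coisotropic Embedding Theorem. Let V be a finite-dimensional real vector space and ω : V → V → ℝ an alternating bilinear form (a pre-symplectic form), with kernel K = {v ∈ V | ∀ w ∈ V, ω(v, w) = 0}, and let p : V →ₗ[ℝ] K be a linear map with p(x) = x for all x ∈ K. Set Ṽ = V × (Dual ℝ K) and define ω̃((v, α), (w, β)) = ω(v, w) + β(p v) − α(p w). Let j : V →ₗ[ℝ] Ṽ be the map j(v) = (v, 0). Then: (i) ω̃ is a nondegenerate alternating bilinear form on Ṽ; (ii) j is injective and ω̃(j v, j w) = ω(v, w) for all v, w ∈ V; (iii) the ω̃-orthogonal of the range of j is contained in the range of j, i.e. the image of V in Ṽ is a coisotropic subspace. -/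

import Mathlib

open Module

/-- Linear Coisotropic Embedding Theorem: given a pre-symplectic (alternating)
form `ω` on a finite-dimensional real vector space `V` with kernel `K`, a
projection `p : V → K` onto `K`, the thickening form
`Ω((v, α), (w, β)) = ω v w + β (p v) - α (p w)` on `Ṽ = V × Dual ℝ K`, and the
embedding `j : V → Ṽ`, `j v = (v, 0)`, one has: (i) `Ω` is a nondegenerate
alternating form; (ii) `j` is injective and pulls `Ω` back to `ω`; (iii) the
`Ω`-orthogonal of the range of `j` is contained in the range of `j`, i.e. the
image of `V` is a coisotropic subspace of `(Ṽ, Ω)`. -/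
theorem stmt9 (V : Type*) [AddCommGroup V] [Module ℝ V] [FiniteDimensional ℝ V]
    (ω : V →ₗ[ℝ] V →ₗ[ℝ] ℝ) (hω : LinearMap.BilinForm.IsAlt ω)
    (K : Submodule ℝ V) (hK : ∀ v, v ∈ K ↔ ∀ w, ω v w = 0)
    (p : V →ₗ[ℝ] K) (hp : ∀ x : K, p (x : V) = x)
    (Ω : (V × Dual ℝ K) →ₗ[ℝ] (V × Dual ℝ K) →ₗ[ℝ] ℝ)
    (hΩ : ∀ (v w : V) (α β : Dual ℝ K),
      Ω (v, α) (w, β) = ω v w + β (p v) - α (p w))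
    (j : V →ₗ[ℝ] V × Dual ℝ K) (hj : ∀ v, j v = (v, 0)) :
    (LinearMap.BilinForm.IsAlt Ω ∧ LinearMap.BilinForm.Nondegenerate Ω) ∧
    (Function.Injective j ∧ ∀ v w, Ω (j v) (j w) = ω v w) ∧
    (∀ z : V × Dual ℝ K,
      (∀ u ∈ LinearMap.range j, Ω z u = 0) → z ∈ LinearMap.range j) := by
  -- if w ∈ K then ω v w = 0 (alternation gives skew-symmetry)
  have hKval : ∀ (v : V) (w : V), w ∈ K → ω v w = 0 := by
    intro v w hw
    have h1 : ω w v = 0 := (hK w).mp hw v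
    have h2 : ω v w = - ω w v := (LinearMap.IsAlt.neg hω w v).symm
    rw [h2, h1, neg_zero]
  -- if α kills K then α = 0; and dual separation on K
  have hα0 : ∀ (v : V) (α : Dual ℝ K),
      (∀ y : K, Ω (v, α) ((y : V), 0) = 0) → α = 0 := by
    intro v α h
    ext y
    have := h y
    rw [hΩ, hp, hKval v y y.2] at this
    simpa using this
  refine ⟨⟨?_, ?_⟩, ⟨?_, ?_⟩, ?_⟩
  · -- alternating
    rintro ⟨v, α⟩
    rw [hΩ, hω v]
    ring
  · -- nondegenerate
    refine (LinearMap.IsRefl.nondegenerate_iff_separatingLeft (fun x y h => ?_)).mpr ?_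
    · obtain ⟨v, α⟩ := x
      obtain ⟨w, β⟩ := y
      rw [hΩ] at h ⊢
      linarith [LinearMap.IsAlt.neg hω v w]
    rintro ⟨v, α⟩ hx
    have hA : α = 0 := hα0 v α (fun y => hx (y, 0))
    have hvK : v ∈ K := by
      rw [hK]
      intro w
      have := hx (w, 0)
      rw [hΩ, hA] at this
      simpa using this
    have hpv : ∀ β : Dual ℝ K, β (p v) = 0 := by
      intro β
      have := hx (0, β)
      rw [hΩ] at this
      simpa using this
    have hpv0 : p v = 0 := (Module.forall_dual_apply_eq_zero_iff ℝ (p v)).mp hpv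
    have : (v : V) = 0 := by
      have := hp ⟨v, hvK⟩
      simp only [hpv0] at this
      exact congrArg Subtype.val this.symm
    simp [Prod.ext_iff, this, hA]
  · -- injective
    intro a b hab
    have := congrArg Prod.fst (by rw [← hj a, ← hj b, hab] : ((a, (0 : Dual ℝ K)) : V × Dual ℝ K) = (b, 0))
    exact this
  · -- pullback
    intro v w
    rw [hj v, hj w, hΩ]
    simp
  · -- coisotropic
    rintro ⟨v, α⟩ hz
    have hA : α = 0 := by
      refine hα0 v α (fun y => ?_)
      exact hz ((y : V), 0) ⟨y, by rw [hj]⟩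
    exact ⟨v, by rw [hj, hA]⟩
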